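/- Let $x, y \in \mathbb{R}$ with $0 \le x \le 1/2$ and $y \ge \sqrt{1-x^2}$, and let $\xi_{m,n} = m(1 - ix/y) + n(i/y) \in \mathbb{C}$. Define $r_1 = (y^2+x^2-x)/(y^2+x^2-x+1)$, $r_2 = (1-x)/(y^2+x^2-x+1)$, $r_3 = x/(y^2+x^2-x+1)$. Then $r_1 \xi_{0,1}^2 + r_2 \xi_{1,0}^2 + r_3 \xi_{1,1}^2 = 0$ and $r_1 |\xi_{0,1}|^2 + r_2 |\xi_{1,0}|^2 + r_3 |\xi_{1,1}|^2 = 2/(y^2+x^2-x+1)$. -/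

import Mathlib

theorem stmt_5 (x y : ℝ) (hx0 : 0 ≤ x) (hx1 : x ≤ 1/2)
    (hy : Real.sqrt (1 - x^2) ≤ y)
    (ξ : ℤ → ℤ → ℂ)
    (hξ : ∀ m n : ℤ, ξ m n = (m : ℂ) * (1 - Complex.I * x / y) + (n : ℂ) * (Complex.I / y))
    (r1 r2 r3 : ℝ)
    (hr1 : r1 = (y^2 + x^2 - x) / (y^2 + x^2 - x + 1))
    (hr2 : r2 = (1 - x) / (y^2 + x^2 - x + 1))
    (hr3 : r3 = x / (y^2 + x^2 - x + 1)) :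
    (r1 : ℂ) * (ξ 0 1)^2 + (r2 : ℂ) * (ξ 1 0)^2 + (r3 : ℂ) * (ξ 1 1)^2 = 0 ∧
    r1 * ‖ξ 0 1‖ ^ 2 + r2 * ‖ξ 1 0‖ ^ 2
      + r3 * ‖ξ 1 1‖ ^ 2 = 2 / (y^2 + x^2 - x + 1) := by
  have h1 : (0:ℝ) < 1 - x^2 := by nlinarith
  have hy0 : 0 < y := lt_of_lt_of_le (Real.sqrt_pos.mpr h1) hy
  have hy2 : 1 - x^2 ≤ y^2 := by
    nlinarith [Real.sq_sqrt h1.le, Real.sqrt_nonneg (1 - x^2)]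
  have hD : (0:ℝ) < y^2 + x^2 - x + 1 := by nlinarith
  have hyne : (y:ℂ) ≠ 0 := by exact_mod_cast hy0.ne'
  have hDne : (y^2 + x^2 - x + 1 : ℝ) ≠ 0 := hD.ne'
  have hy2ne : y^2 ≠ 0 := by positivity
  constructor
  · simp only [hξ, hr1, hr2, hr3]
    push_cast
    field_simp
    ring_nf
    simp [Complex.I_sq]
  · have e1 : ‖ξ 0 1‖ ^ 2 = 1 / y^2 := by
      rw [Complex.sq_norm, Complex.normSq_apply]
      simp [hξ, Complex.div_re, Complex.div_im, Complex.normSq_apply]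
      field_simp
    have e2 : ‖ξ 1 0‖ ^ 2 = 1 + x^2 / y^2 := by
      rw [Complex.sq_norm, Complex.normSq_apply]
      simp [hξ, Complex.div_re, Complex.div_im, Complex.normSq_apply]
      field_simp
    have e3 : ‖ξ 1 1‖ ^ 2 = 1 + (1 - x)^2 / y^2 := by
      rw [Complex.sq_norm, Complex.normSq_apply]
      simp [hξ, Complex.div_re, Complex.div_im, Complex.normSq_apply]
      field_simp
      ring
    rw [e1, e2, e3, hr1, hr2, hr3]
    field_simp
    ring
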